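/- For every k ∈ ℕ and every z ∈ ℂ, the Bargmann transform of the k-th Hermite function is the monomial z^k/√(k!), i.e. (e^{-z²/2}/π^{1/4}) ∫_ℝ h_k(x) e^{√2·xz − x²/2} dx = z^k/√(k!). -/

import Mathlib

open MeasureTheory Real Nat

/-- The physicists' Hermite polynomial `H_k(x) = (−1)^k e^{x²} (d^k/dx^k) e^{−x²}`. -/
noncomputable def physHermite (k : ℕ) (x : ℝ) : ℝ :=
  (-1 : ℝ) ^ k * Real.exp (x ^ 2) * iteratedDeriv k (fun t : ℝ => Real.exp (-t ^ 2)) x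

/-- The `k`-th Hermite function `h_k(x) = (2^k k! √π)^{−1/2} H_k(x) e^{−x²/2}`. -/
noncomputable def hermiteFun (k : ℕ) (x : ℝ) : ℝ :=
  (Real.sqrt (2 ^ k * (k ! : ℝ) * Real.sqrt π))⁻¹ * physHermite k x * Real.exp (-x ^ 2 / 2)

namespace BargmannAux

open Polynomial

/-- auxiliary polynomials: `d^k/dx^k e^{-x²} = (hP k).eval x * e^{-x²}` -/
noncomputable def hP : ℕ → Polynomial ℝ
  | 0 => 1
  | (k+1) => derivative (hP k) - Polynomial.C 2 * Polynomial.X * hP k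

lemma hasDerivAt_G (k : ℕ) (x : ℝ) :
    HasDerivAt (fun x : ℝ => (hP k).eval x * rexp (-x ^ 2))
      ((hP (k+1)).eval x * rexp (-x ^ 2)) x := by
  have h0 : HasDerivAt (fun x : ℝ => -x ^ 2) (-(2 * x)) x := by
    simpa using (hasDerivAt_pow 2 x).fun_neg
  have h2 : HasDerivAt (fun x : ℝ => rexp (-x ^ 2)) (rexp (-x ^ 2) * (-(2 * x))) x := h0.exp
  have h1 := (hP k).hasDerivAt x
  refine (h1.fun_mul h2).congr_deriv ?_
  simp [hP]
  ring

lemma G_eq (k : ℕ) :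
    iteratedDeriv k (fun t : ℝ => rexp (-t ^ 2)) = fun x => (hP k).eval x * rexp (-x ^ 2) := by
  induction k with
  | zero => funext x; simp [hP]
  | succ k ih =>
      rw [iteratedDeriv_succ, ih]
      funext x
      exact (hasDerivAt_G k x).deriv

lemma abs_pow_le (x : ℝ) (n : ℕ) : |x| ^ n ≤ 1 + x ^ (2 * n) := by
  have hnn : (0:ℝ) ≤ x ^ (2 * n) := by rw [pow_mul]; positivity
  rcases le_total (|x|) 1 with h | h
  · have := pow_le_one₀ (abs_nonneg x) h (n := n)
    linarith
  · have h1 : |x| ≤ |x| ^ 2 := by nlinarith [abs_nonneg x]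
    have h2 : |x| ^ n ≤ (|x| ^ 2) ^ n := pow_le_pow_left₀ (abs_nonneg x) h1 n
    have h3 : (|x| ^ 2) ^ n = x ^ (2 * n) := by rw [_root_.sq_abs, ← pow_mul]
    linarith [h3 ▸ h2]

lemma integrable_pow_gauss (n : ℕ) (a : ℝ) :
    Integrable fun x : ℝ => x ^ n * rexp (-x ^ 2 + a * x) := by
  have hg1 : Integrable (fun x : ℝ => rexp (-(1/2 : ℝ) * x ^ 2)) :=
    integrable_exp_neg_mul_sq (by norm_num)
  have hg2 : Integrable (fun x : ℝ => x ^ (2 * n) * rexp (-(1/2 : ℝ) * x ^ 2)) := by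
    have h := integrable_rpow_mul_exp_neg_mul_sq (b := (1/2 : ℝ)) (by norm_num)
      (s := ((2 * n : ℕ) : ℝ)) (by exact_mod_cast lt_of_lt_of_le neg_one_lt_zero (Nat.cast_nonneg _))
    exact h.congr (Filter.Eventually.of_forall fun x => by dsimp only; rw [Real.rpow_natCast])
  have hg : Integrable (fun x : ℝ =>
      rexp (a ^ 2 / 2) * (rexp (-(1/2 : ℝ) * x ^ 2) + x ^ (2 * n) * rexp (-(1/2 : ℝ) * x ^ 2))) :=
    (hg1.add hg2).const_mul _
  refine hg.mono' ?_ ?_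
  · exact (Continuous.mul (continuous_pow n) (by continuity)).aestronglyMeasurable
  · refine Filter.Eventually.of_forall fun x => ?_
    have h1 : rexp (-x ^ 2 + a * x) ≤ rexp (a ^ 2 / 2) * rexp (-(1/2 : ℝ) * x ^ 2) := by
      rw [← Real.exp_add]
      apply Real.exp_le_exp.mpr
      nlinarith [sq_nonneg (x - a)]
    have h2 := abs_pow_le x n
    have hnn : (0:ℝ) ≤ x ^ (2 * n) := by rw [pow_mul]; positivity
    have hxpos : (0:ℝ) ≤ rexp (-x ^ 2 + a * x) := (Real.exp_pos _).le
    have habs : ‖x ^ n * rexp (-x ^ 2 + a * x)‖ = |x| ^ n * rexp (-x ^ 2 + a * x) := by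
      rw [norm_mul, Real.norm_eq_abs, Real.norm_eq_abs, _root_.abs_pow,
        _root_.abs_of_nonneg hxpos]
    rw [habs]
    calc |x| ^ n * rexp (-x ^ 2 + a * x)
        ≤ (1 + x ^ (2 * n)) * (rexp (a ^ 2 / 2) * rexp (-(1/2 : ℝ) * x ^ 2)) := by
          apply mul_le_mul h2 h1 hxpos
          positivity
      _ = rexp (a ^ 2 / 2) *
          (rexp (-(1/2 : ℝ) * x ^ 2) + x ^ (2*n) * rexp (-(1/2 : ℝ) * x ^ 2)) := by ring

lemma integrable_poly_gauss (p : Polynomial ℝ) (a : ℝ) :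
    Integrable fun x : ℝ => p.eval x * rexp (-x ^ 2 + a * x) := by
  have h : (fun x : ℝ => p.eval x * rexp (-x ^ 2 + a * x)) =
      fun x : ℝ => ∑ i ∈ Finset.range (p.natDegree + 1),
        p.coeff i * (x ^ i * rexp (-x ^ 2 + a * x)) := by
    funext x
    rw [Polynomial.eval_eq_sum_range, Finset.sum_mul]
    simp [mul_assoc]
  rw [h]
  exact integrable_finset_sum _ fun i _ => (integrable_pow_gauss i a).const_mul _

lemma integrable_poly_gauss_cexp (p : Polynomial ℝ) (c : ℂ) :
    Integrable fun x : ℝ => ((p.eval x * rexp (-x ^ 2) : ℝ) : ℂ) * Complex.exp (c * x) := by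
  have hg : Integrable fun x : ℝ => |p.eval x| * rexp (-x ^ 2 + c.re * x) := by
    refine (integrable_poly_gauss p c.re).abs.congr (Filter.Eventually.of_forall fun x => ?_)
    dsimp only
    rw [abs_mul, _root_.abs_of_nonneg (Real.exp_pos _).le]
  refine hg.mono' ?_ (Filter.Eventually.of_forall fun x => ?_)
  · apply Continuous.aestronglyMeasurable
    refine (Complex.continuous_ofReal.comp ((p.continuous).mul ?_)).mul
      (Complex.continuous_exp.comp ?_)
    · exact Real.continuous_exp.comp (by continuity)
    · continuity
  · rw [norm_mul, Complex.norm_real, Real.norm_eq_abs,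
      Complex.norm_exp]
    have hre : (c * (x : ℂ)).re = c.re * x := by simp
    rw [hre, abs_mul, _root_.abs_of_nonneg (Real.exp_pos _).le, mul_assoc, ← Real.exp_add]

lemma key (c : ℂ) (k : ℕ) :
    ∫ x : ℝ, (((hP k).eval x * rexp (-x ^ 2) : ℝ) : ℂ) * Complex.exp (c * x) =
      (-c) ^ k * ∫ x : ℝ, Complex.exp (-(x:ℂ) ^ 2 + c * x) := by
  induction k with
  | zero =>
      rw [pow_zero, one_mul]
      congr 1
      funext x
      rw [show (-(x:ℂ) ^ 2 + c * (x:ℂ)) = ((-x^2 : ℝ) : ℂ) + c * x by push_cast; ring,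
        Complex.exp_add, ← Complex.ofReal_exp]
      simp [hP]
  | succ k ih =>
      have hu : ∀ x : ℝ, HasDerivAt (fun x : ℝ => (((hP k).eval x * rexp (-x ^ 2) : ℝ) : ℂ))
          ((((hP (k+1)).eval x * rexp (-x ^ 2) : ℝ) : ℂ)) x :=
        fun x => (hasDerivAt_G k x).ofReal_comp
      have hv : ∀ x : ℝ, HasDerivAt (fun x : ℝ => Complex.exp (c * (x:ℂ)))
          (Complex.exp (c * (x:ℂ)) * c) x := by
        intro x
        have h1 : HasDerivAt (fun y : ℝ => ((y:ℝ):ℂ)) 1 x := (hasDerivAt_id x).ofReal_comp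
        have h2 := (h1.const_mul c).cexp
        simpa using h2
      have h1 : Integrable ((fun x : ℝ => (((hP k).eval x * rexp (-x ^ 2) : ℝ) : ℂ)) *
          fun x : ℝ => Complex.exp (c * (x:ℂ)) * c) := by
        refine ((integrable_poly_gauss_cexp (hP k) c).mul_const c).congr
          (Filter.Eventually.of_forall fun x => ?_)
        simp [Pi.mul_apply]; ring
      have h2 : Integrable ((fun x : ℝ => (((hP (k+1)).eval x * rexp (-x ^ 2) : ℝ) : ℂ)) *
          fun x : ℝ => Complex.exp (c * (x:ℂ))) := by
        refine (integrable_poly_gauss_cexp (hP (k+1)) c).congr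
          (Filter.Eventually.of_forall fun x => ?_)
        simp [Pi.mul_apply]
      have h3 : Integrable ((fun x : ℝ => (((hP k).eval x * rexp (-x ^ 2) : ℝ) : ℂ)) *
          fun x : ℝ => Complex.exp (c * (x:ℂ))) := by
        refine (integrable_poly_gauss_cexp (hP k) c).congr
          (Filter.Eventually.of_forall fun x => ?_)
        simp [Pi.mul_apply]
      have ibp := integral_mul_deriv_eq_deriv_mul_of_integrable (fun x _ => hu x) (fun x _ => hv x) h1 h2 h3
      have hl : ∫ x : ℝ, (((hP k).eval x * rexp (-x ^ 2) : ℝ) : ℂ) *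
          (Complex.exp (c * (x:ℂ)) * c) =
          (∫ x : ℝ, (((hP k).eval x * rexp (-x ^ 2) : ℝ) : ℂ) * Complex.exp (c * (x:ℂ))) * c := by
        rw [← integral_mul_const]
        congr 1
        funext x
        ring
      have : -∫ x : ℝ, (((hP (k+1)).eval x * rexp (-x ^ 2) : ℝ) : ℂ) *
          Complex.exp (c * (x:ℂ)) =
          (∫ x : ℝ, (((hP k).eval x * rexp (-x ^ 2) : ℝ) : ℂ) * Complex.exp (c * (x:ℂ))) * c := by
        rw [← hl, ← ibp]
      rw [← neg_neg (∫ x : ℝ, (((hP (k+1)).eval x * rexp (-x ^ 2) : ℝ) : ℂ) *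
          Complex.exp (c * (x:ℂ))), this, ih]
      ring

lemma gauss_int (c : ℂ) :
    ∫ x : ℝ, Complex.exp (-(x:ℂ) ^ 2 + c * x) = (π:ℂ) ^ (1/2 : ℂ) * Complex.exp (c ^ 2 / 4) := by
  have h := integral_cexp_quadratic (b := -1) (by simp) c 0
  rw [show ∫ x : ℝ, Complex.exp (-(x:ℂ) ^ 2 + c * x) =
      ∫ x : ℝ, Complex.exp (-1 * (x:ℂ) ^ 2 + c * x + 0) by congr 1; funext x; ring_nf, h]
  congr 1
  · norm_num
  · congr 1; ring


lemma sqrt_pow2 (k : ℕ) : Real.sqrt (2 ^ k) = (Real.sqrt 2) ^ k := by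
  induction k with
  | zero => simp
  | succ k ih => rw [pow_succ, Real.sqrt_mul (by positivity), ih, pow_succ]

lemma realconst (k : ℕ) :
    (Real.sqrt (2 ^ k * (k ! : ℝ) * Real.sqrt π))⁻¹ * (Real.sqrt 2) ^ k * Real.sqrt π *
      Real.sqrt (k ! : ℝ) = π ^ ((1:ℝ)/4) := by
  have hfac : (0:ℝ) < (k ! : ℝ) := by exact_mod_cast k.factorial_pos
  have h1 : Real.sqrt (2 ^ k * (k ! : ℝ) * Real.sqrt π) =
      (Real.sqrt 2) ^ k * Real.sqrt (k ! : ℝ) * Real.sqrt (Real.sqrt π) := by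
    rw [Real.sqrt_mul (by positivity), Real.sqrt_mul (by positivity), sqrt_pow2]
  have h2 : Real.sqrt (Real.sqrt π) = π ^ ((1:ℝ)/4) := by
    rw [Real.sqrt_eq_rpow, Real.sqrt_eq_rpow, ← Real.rpow_mul pi_pos.le]
    norm_num
  have h3 : Real.sqrt π = π ^ ((1:ℝ)/4) * π ^ ((1:ℝ)/4) := by
    rw [Real.sqrt_eq_rpow, ← Real.rpow_add pi_pos]
    norm_num
  rw [h1, h2, h3]
  have hs2 : (0:ℝ) < Real.sqrt 2 := Real.sqrt_pos.mpr (by norm_num)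
  have hsf : (0:ℝ) < Real.sqrt (k ! : ℝ) := Real.sqrt_pos.mpr hfac
  have hp4 : (0:ℝ) < π ^ ((1:ℝ)/4) := Real.rpow_pos_of_pos pi_pos _
  field_simp


lemma cend (k : ℕ) (z : ℂ) :
    Complex.exp (-z ^ 2 / 2) / ((π ^ ((1 : ℝ) / 4) : ℝ) : ℂ) *
      (((((Real.sqrt (2 ^ k * (k ! : ℝ) * Real.sqrt π))⁻¹ * (-1) ^ k : ℝ)) : ℂ) *
        ((-((Real.sqrt 2 : ℂ) * z)) ^ k *
          ((π : ℂ) ^ ((1:ℂ)/2) * Complex.exp (((Real.sqrt 2 : ℂ) * z) ^ 2 / 4)))) =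
      z ^ k / ((Real.sqrt (k ! : ℝ) : ℝ) : ℂ) := by
  have hfac : (0:ℝ) < (k ! : ℝ) := by exact_mod_cast k.factorial_pos
  have hp4 : (0:ℝ) < π ^ ((1:ℝ)/4) := Real.rpow_pos_of_pos pi_pos _
  have hsf : (0:ℝ) < Real.sqrt (k ! : ℝ) := Real.sqrt_pos.mpr hfac
  have h1 : (π : ℂ) ^ ((1:ℂ)/2) = ((Real.sqrt π : ℝ) : ℂ) := by
    rw [Real.sqrt_eq_rpow, Complex.ofReal_cpow pi_pos.le]
    norm_num
  have hc2 : ((Real.sqrt 2 : ℂ) * z) ^ 2 / 4 = z ^ 2 / 2 := by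
    rw [mul_pow, ← Complex.ofReal_pow, Real.sq_sqrt (by norm_num : (0:ℝ) ≤ 2)]
    push_cast
    ring
  have hexp : Complex.exp (-z ^ 2 / 2) * Complex.exp (z ^ 2 / 2) = 1 := by
    rw [← Complex.exp_add, show (-z ^ 2 / 2 + z ^ 2 / 2 : ℂ) = 0 by ring, Complex.exp_zero]
  have h3 : (-((Real.sqrt 2 : ℂ) * z)) ^ k =
      (-1 : ℂ) ^ k * ((Real.sqrt 2 : ℝ) : ℂ) ^ k * z ^ k := by
    rw [← mul_pow, ← mul_pow]; ring_nf
  have hmm : (-1 : ℂ) ^ k * (-1 : ℂ) ^ k = 1 := by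
    rw [← mul_pow]; norm_num
  have hcon : ((Real.sqrt (2 ^ k * (k ! : ℝ) * Real.sqrt π) : ℝ) : ℂ)⁻¹ *
      ((Real.sqrt 2 : ℝ) : ℂ) ^ k * ((Real.sqrt π : ℝ) : ℂ) * ((Real.sqrt (k ! : ℝ) : ℝ) : ℂ) =
      ((π ^ ((1:ℝ)/4) : ℝ) : ℂ) := by
    rw [← Complex.ofReal_inv, ← Complex.ofReal_pow, ← Complex.ofReal_mul, ← Complex.ofReal_mul,
      ← Complex.ofReal_mul]
    exact_mod_cast congrArg (Complex.ofReal) (realconst k)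
  rw [hc2, h1, h3]
  push_cast
  have hne1 : ((π ^ ((1:ℝ)/4) : ℝ) : ℂ) ≠ 0 := by exact_mod_cast hp4.ne'
  have hne2 : ((Real.sqrt (k ! : ℝ) : ℝ) : ℂ) ≠ 0 := by exact_mod_cast hsf.ne'
  rw [div_mul_eq_mul_div, div_eq_div_iff hne1 hne2]
  linear_combination (((Real.sqrt (2 ^ k * (k ! : ℝ) * Real.sqrt π) : ℝ) : ℂ))⁻¹ *
      ((-1:ℂ)^k * (-1:ℂ)^k) * ((Real.sqrt 2 : ℝ) : ℂ) ^ k * ((Real.sqrt π : ℝ) : ℂ) *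
      ((Real.sqrt (k ! : ℝ) : ℝ) : ℂ) * z ^ k * hexp +
    z ^ k * hcon +
    (((Real.sqrt (2 ^ k * (k ! : ℝ) * Real.sqrt π) : ℝ) : ℂ))⁻¹ * ((Real.sqrt 2 : ℝ) : ℂ) ^ k *
      ((Real.sqrt π : ℝ) : ℂ) * ((Real.sqrt (k ! : ℝ) : ℝ) : ℂ) * z ^ k * hmm

lemma hpt_aux (k : ℕ) (z : ℂ) (x : ℝ) (a : ℝ) :
    ((a * ((-1:ℝ)^k * rexp (x^2) * ((hP k).eval x * rexp (-x^2))) * rexp (-x^2/2) : ℝ) : ℂ) *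
      Complex.exp ((Real.sqrt 2 : ℂ) * x * z - (x:ℂ)^2/2) =
      ((a * (-1)^k : ℝ) : ℂ) * ((((hP k).eval x * rexp (-x ^ 2) : ℝ) : ℂ) *
        Complex.exp (((Real.sqrt 2 : ℂ) * z) * x)) := by
  have hE : Complex.exp ((x:ℂ)^2) * Complex.exp (-(x:ℂ)^2/2) *
      Complex.exp ((Real.sqrt 2:ℂ)*x*z - (x:ℂ)^2/2) = Complex.exp ((Real.sqrt 2:ℂ)*z*x) := by
    rw [← Complex.exp_add, ← Complex.exp_add]; congr 1; ring
  push_cast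
  linear_combination (↑a * (-1:ℂ)^k * ((((hP k).eval x : ℝ)) : ℂ) * Complex.exp (-(x:ℂ)^2)) * hE

end BargmannAux

open BargmannAux in
/-- The Bargmann transform of the `k`-th Hermite function is the monomial `z^k/√(k!)`. -/
theorem bargmann_hermiteFun (k : ℕ) (z : ℂ) :
    Complex.exp (-z ^ 2 / 2) / ((π ^ ((1 : ℝ) / 4) : ℝ) : ℂ) *
      ∫ x : ℝ, (hermiteFun k x : ℂ) *
        Complex.exp ((Real.sqrt 2 : ℂ) * (x : ℂ) * z - (x : ℂ) ^ 2 / 2) =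
      z ^ k / ((Real.sqrt (k ! : ℝ) : ℝ) : ℂ) := by
  have hint : (∫ x : ℝ, (hermiteFun k x : ℂ) *
        Complex.exp ((Real.sqrt 2 : ℂ) * (x : ℂ) * z - (x : ℂ) ^ 2 / 2)) =
      ∫ x : ℝ, (((Real.sqrt (2 ^ k * (k ! : ℝ) * Real.sqrt π))⁻¹ * (-1) ^ k : ℝ) : ℂ) *
        ((((hP k).eval x * rexp (-x ^ 2) : ℝ) : ℂ) *
          Complex.exp (((Real.sqrt 2 : ℂ) * z) * x)) := by
    congr 1
    funext x
    rw [show (hermiteFun k x : ℂ) =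
        (((Real.sqrt (2 ^ k * (k ! : ℝ) * Real.sqrt π))⁻¹ *
          ((-1:ℝ)^k * rexp (x^2) * ((hP k).eval x * rexp (-x^2))) * rexp (-x^2/2) : ℝ) : ℂ) by
      rw [hermiteFun, physHermite, G_eq]]
    exact hpt_aux k z x _
  rw [hint, MeasureTheory.integral_const_mul, key ((Real.sqrt 2 : ℂ) * z) k,
    gauss_int ((Real.sqrt 2 : ℂ) * z)]
  exact cend k z
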